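/- For every real μ ≠ 0 and every b ∈ ℝ, the symmetric principal-value Fourier integral of the Cauchy kernel satisfies: the limit as ε → 0⁺ of ∫_{ε ≤ |t − b| ≤ 1/ε} e^{iμt}/(t − b) dt exists and equals iπ·sgn(μ)·e^{iμb}, where sgn(μ) = 1 if μ > 0 and sgn(μ) = −1 if μ < 0. -/

import Mathlib

open Real Complex MeasureTheory Filter Set

namespace PVCauchyAux

open intervalIntegral
open scoped Topology


lemma sinc_bound (u : ℝ) : ‖Real.sin u / u‖ ≤ 1 := by
  rcases eq_or_ne u 0 with h | h
  · simp [h]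
  · rw [norm_div, Real.norm_eq_abs, Real.norm_eq_abs, div_le_one (abs_pos.2 h)]
    exact Real.abs_sin_le_abs

lemma sinc_II (a c : ℝ) : IntervalIntegrable (fun u => Real.sin u / u) volume a c := by
  have hm : AEStronglyMeasurable (fun u : ℝ => Real.sin u / u) volume :=
    (Real.measurable_sin.div measurable_id).aestronglyMeasurable
  constructor <;>
    exact (integrable_const (1:ℝ)).mono' hm.restrict (ae_of_all _ fun u => sinc_bound u)

lemma hasDeriv_F (t u : ℝ) :
    HasDerivAt (fun u => -(Real.exp (-(u*t)) * (t * Real.sin u + Real.cos u)) / (1 + t^2))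
      (Real.exp (-(u*t)) * Real.sin u) u := by
  have h0 : (1:ℝ) + t^2 ≠ 0 := by positivity
  have h1 : HasDerivAt (fun u : ℝ => -(u*t)) (-t) u := by
    exact (((hasDerivAt_id u).mul_const t).neg).congr_deriv (by ring)
  have h2 : HasDerivAt (fun u : ℝ => Real.exp (-(u*t))) (Real.exp (-(u*t)) * (-t)) u := h1.exp
  have h3 : HasDerivAt (fun u : ℝ => t * Real.sin u + Real.cos u)
      (t * Real.cos u + -Real.sin u) u :=
    ((Real.hasDerivAt_sin u).const_mul t).add (Real.hasDerivAt_cos u)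
  have h4 := ((h2.mul h3).neg).div_const (1 + t^2)
  refine h4.congr_deriv ?_
  rw [div_eq_iff h0]
  ring

lemma inner_integral (t R : ℝ) :
    ∫ u in (0:ℝ)..R, Real.exp (-(u*t)) * Real.sin u
      = (1 - Real.exp (-(R*t)) * (t * Real.sin R + Real.cos R)) / (1 + t^2) := by
  have h0 : (1:ℝ) + t^2 ≠ 0 := by positivity
  have hc : Continuous fun u : ℝ => Real.exp (-(u*t)) * Real.sin u := by
    exact ((continuous_id.mul continuous_const).neg.rexp).mul Real.continuous_sin
  rw [integral_eq_sub_of_hasDerivAt (fun u _ => hasDeriv_F t u) (hc.intervalIntegrable 0 R)]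
  simp only [mul_zero, zero_mul, neg_zero, Real.exp_zero, Real.sin_zero, Real.cos_zero]
  field_simp
  ring

lemma integral_exp_neg_mul {c : ℝ} (hc : 0 < c) :
    ∫ t in Ioi (0:ℝ), Real.exp (-(c*t)) = 1/c := by
  have hd : ∀ x ∈ Ici (0:ℝ), HasDerivAt (fun t => -Real.exp (-(c*t))/c) (Real.exp (-(c*x))) x := by
    intro x _
    have h1 : HasDerivAt (fun t : ℝ => -(c*t)) (-c) x := by
      exact (((hasDerivAt_id x).const_mul c).neg).congr_deriv (by ring)
    have := (h1.exp.neg).div_const c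
    refine this.congr_deriv ?_
    rw [div_eq_iff hc.ne']
    ring
  have hi : IntegrableOn (fun t => Real.exp (-(c*t))) (Ioi (0:ℝ)) := by
    simpa [neg_mul] using exp_neg_integrableOn_Ioi 0 hc
  have ht : Tendsto (fun t => -Real.exp (-(c*t))/c) atTop (𝓝 0) := by
    have hneg : Tendsto (fun t : ℝ => -(c*t)) atTop atBot := by
      simpa [neg_mul] using (tendsto_id.const_mul_atTop_of_neg (show -c < 0 by linarith) :
        Tendsto (fun t : ℝ => -c * id t) atTop atBot)
    have : Tendsto (fun t : ℝ => Real.exp (-(c*t))) atTop (𝓝 0) :=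
      Real.tendsto_exp_atBot.comp hneg
    simpa using (this.neg).div_const c
  rw [integral_Ioi_of_hasDerivAt_of_tendsto' hd hi ht]
  simp [neg_div, one_div]



lemma key_identity {R : ℝ} (hR : 0 < R) :
    ∫ u in (0:ℝ)..R, Real.sin u / u
      = ∫ t in Ioi (0:ℝ),
          (1 - Real.exp (-(R*t)) * (t * Real.sin R + Real.cos R)) / (1 + t^2) := by
  have hcont : Continuous (Function.uncurry fun u t : ℝ => Real.exp (-(u*t)) * Real.sin u) := by
    exact ((continuous_fst.mul continuous_snd).neg.rexp).mul
      (Real.continuous_sin.comp continuous_fst)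
  have hmeas : AEStronglyMeasurable (Function.uncurry fun u t : ℝ => Real.exp (-(u*t)) * Real.sin u)
      ((volume.restrict (Ioc (0:ℝ) R)).prod (volume.restrict (Ioi (0:ℝ)))) :=
    hcont.aestronglyMeasurable
  have hintexp : ∀ u : ℝ, 0 < u →
      IntegrableOn (fun t => Real.exp (-(u*t))) (Ioi (0:ℝ)) := by
    intro u hu
    simpa [neg_mul] using exp_neg_integrableOn_Ioi 0 hu
  have hint : Integrable (Function.uncurry fun u t : ℝ => Real.exp (-(u*t)) * Real.sin u)
      ((volume.restrict (Ioc (0:ℝ) R)).prod (volume.restrict (Ioi (0:ℝ)))) := by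
    rw [integrable_prod_iff hmeas]
    constructor
    · filter_upwards [ae_restrict_mem measurableSet_Ioc] with u hu
      simp only [Function.uncurry_apply_pair]
      exact ((hintexp u hu.1).mul_const _)
    · apply Integrable.mono' (integrable_const (1:ℝ))
      · exact hmeas.norm.integral_prod_right'
      · filter_upwards [ae_restrict_mem measurableSet_Ioc] with u hu
        simp only [Function.uncurry_apply_pair]
        have h1 : ∫ t in Ioi (0:ℝ), ‖Real.exp (-(u*t)) * Real.sin u‖
            = (1/u) * |Real.sin u| := by
          simp only [norm_mul, Real.norm_eq_abs, Real.abs_exp]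
          rw [MeasureTheory.integral_mul_const, integral_exp_neg_mul hu.1]
        rw [Real.norm_eq_abs, h1]
        rw [_root_.abs_of_nonneg (mul_nonneg (div_nonneg zero_le_one hu.1.le) (abs_nonneg _))]
        rw [div_mul_eq_mul_div, one_mul, div_le_one hu.1]
        exact (Real.abs_sin_le_abs).trans_eq (_root_.abs_of_pos hu.1)
  have swap := integral_integral_swap hint
  -- LHS of swap equals our integral
  have hL : (∫ u in Ioc (0:ℝ) R, ∫ t in Ioi (0:ℝ), Real.exp (-(u*t)) * Real.sin u)
      = ∫ u in Ioc (0:ℝ) R, Real.sin u / u := by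
    apply setIntegral_congr_ae measurableSet_Ioc
    filter_upwards with u hu
    rw [MeasureTheory.integral_mul_const, integral_exp_neg_mul hu.1, one_div, inv_mul_eq_div]
  have hR' : (∫ t in Ioi (0:ℝ), ∫ u in Ioc (0:ℝ) R, Real.exp (-(u*t)) * Real.sin u)
      = ∫ t in Ioi (0:ℝ),
          (1 - Real.exp (-(R*t)) * (t * Real.sin R + Real.cos R)) / (1 + t^2) := by
    apply setIntegral_congr_ae measurableSet_Ioi
    filter_upwards with t _
    rw [← intervalIntegral.integral_of_le hR.le, inner_integral]
  rw [intervalIntegral.integral_of_le hR.le, ← hL, swap, hR']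



lemma dirichlet_bound {R : ℝ} (hR : 0 < R) :
    ‖(∫ u in (0:ℝ)..R, Real.sin u / u) - π/2‖ ≤ 2/R := by
  have hg : IntegrableOn (fun t : ℝ => (1+t^2)⁻¹) (Ioi (0:ℝ)) :=
    integrable_inv_one_add_sq.integrableOn
  have hexp : IntegrableOn (fun t : ℝ => 2 * Real.exp (-(R*t))) (Ioi (0:ℝ)) := by
    have := exp_neg_integrableOn_Ioi 0 hR
    simpa [neg_mul, IntegrableOn] using this.const_mul 2
  set h : ℝ → ℝ := fun t => Real.exp (-(R*t)) * (t * Real.sin R + Real.cos R) / (1 + t^2) with hh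
  have hbound : ∀ t : ℝ, 0 ≤ t → ‖h t‖ ≤ 2 * Real.exp (-(R*t)) := by
    intro t ht
    have h0 : (0:ℝ) < 1 + t^2 := by positivity
    rw [hh]
    simp only [norm_div, norm_mul, Real.norm_eq_abs, Real.abs_exp]
    rw [_root_.abs_of_pos h0, div_le_iff₀ h0]
    have h1 : |t * Real.sin R + Real.cos R| ≤ t + 1 := by
      calc |t * Real.sin R + Real.cos R| ≤ |t * Real.sin R| + |Real.cos R| := abs_add_le _ _
        _ ≤ t * 1 + 1 := by
            rw [abs_mul, _root_.abs_of_nonneg ht]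
            exact add_le_add (mul_le_mul_of_nonneg_left (Real.abs_sin_le_one R) ht)
              (Real.abs_cos_le_one R)
        _ = t + 1 := by ring
    have h2 : t + 1 ≤ 2 * (1 + t^2) := by nlinarith [sq_nonneg (t-1)]
    calc Real.exp (-(R*t)) * |t * Real.sin R + Real.cos R|
        ≤ Real.exp (-(R*t)) * (t+1) := by
          exact mul_le_mul_of_nonneg_left (h1.trans_eq rfl) (Real.exp_nonneg _)
      _ ≤ Real.exp (-(R*t)) * (2 * (1 + t^2)) := mul_le_mul_of_nonneg_left h2 (Real.exp_nonneg _)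
      _ = 2 * Real.exp (-(R*t)) * (1 + t^2) := by ring
  have hhm : AEStronglyMeasurable h (volume.restrict (Ioi (0:ℝ))) := by
    apply Continuous.aestronglyMeasurable
    apply Continuous.div
    · exact ((continuous_const.mul continuous_id).neg.rexp).mul
        ((continuous_id.mul continuous_const).add continuous_const)
    · exact (continuous_const.add (continuous_pow 2))
    · intro t; positivity
  have hhint : IntegrableOn h (Ioi (0:ℝ)) := by
    apply hexp.mono' hhm
    filter_upwards [ae_restrict_mem measurableSet_Ioi] with t ht
    exact hbound t (le_of_lt ht)
  have hsplit : (∫ t in Ioi (0:ℝ),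
      (1 - Real.exp (-(R*t)) * (t * Real.sin R + Real.cos R)) / (1 + t^2))
      = (∫ t in Ioi (0:ℝ), (1+t^2)⁻¹) - ∫ t in Ioi (0:ℝ), h t := by
    rw [← integral_sub hg hhint]
    apply setIntegral_congr_ae measurableSet_Ioi
    filter_upwards with t _
    rw [hh]
    have h0 : (1:ℝ) + t^2 ≠ 0 := by positivity
    field_simp
  have hpi : (∫ t in Ioi (0:ℝ), ((1:ℝ)+t^2)⁻¹) = π/2 := by
    simpa using integral_Ioi_inv_one_add_sq (i := 0)
  rw [key_identity hR, hsplit, hpi]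
  have : ‖π/2 - (∫ t in Ioi (0:ℝ), h t) - π/2‖ = ‖∫ t in Ioi (0:ℝ), h t‖ := by
    rw [show π/2 - (∫ t in Ioi (0:ℝ), h t) - π/2 = -(∫ t in Ioi (0:ℝ), h t) by ring, norm_neg]
  rw [this]
  have hle : ‖∫ t in Ioi (0:ℝ), h t‖ ≤ ∫ t in Ioi (0:ℝ), 2 * Real.exp (-(R*t)) := by
    apply MeasureTheory.norm_integral_le_of_norm_le hexp
    filter_upwards [ae_restrict_mem measurableSet_Ioi] with t ht
    exact hbound t ht.le
  have heval : (∫ t in Ioi (0:ℝ), 2 * Real.exp (-(R*t))) = 2/R := by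
    rw [MeasureTheory.integral_const_mul, integral_exp_neg_mul hR]; ring
  rw [heval] at hle
  exact hle

lemma dirichlet : Tendsto (fun R : ℝ => ∫ u in (0:ℝ)..R, Real.sin u / u) atTop (𝓝 (π/2)) := by
  have h0 : Tendsto (fun R : ℝ => 2/R) atTop (𝓝 0) := by
    simpa [div_eq_mul_inv] using (tendsto_inv_atTop_zero (𝕜 := ℝ)).const_mul 2
  have h1 : Tendsto (fun R : ℝ => (∫ u in (0:ℝ)..R, Real.sin u / u) - π/2) atTop (𝓝 0) := by
    apply squeeze_zero_norm' _ h0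
    filter_upwards [eventually_gt_atTop (0:ℝ)] with R hR
    exact dirichlet_bound hR
  simpa using h1.add_const (π/2)

lemma dirichlet2 {α : Type*} {l : Filter α} {a r : α → ℝ} (ha : Tendsto a l (𝓝 0))
    (hr : Tendsto r l atTop) :
    Tendsto (fun x => ∫ u in a x..r x, Real.sin u / u) l (𝓝 (π/2)) := by
  have h1 : Tendsto (fun x => ∫ u in (0:ℝ)..r x, Real.sin u / u) l (𝓝 (π/2)) :=
    dirichlet.comp hr
  have h2 : Tendsto (fun x => ∫ u in (0:ℝ)..a x, Real.sin u / u) l (𝓝 0) := by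
    apply squeeze_zero_norm _ (show Tendsto (fun x => |a x|) l (𝓝 0) by
      simpa using ha.abs)
    intro x
    calc ‖∫ u in (0:ℝ)..a x, Real.sin u / u‖ ≤ 1 * |a x - 0| :=
        intervalIntegral.norm_integral_le_of_norm_le_const fun u _ => sinc_bound u
      _ = |a x| := by rw [one_mul, sub_zero]
  have h3 := h1.sub h2
  rw [sub_zero] at h3
  apply h3.congr
  intro x
  exact intervalIntegral.integral_interval_sub_left (sinc_II 0 (r x)) (sinc_II 0 (a x))

lemma dirichlet_scaled {c : ℝ} (hc : 0 < c) :
    Tendsto (fun ε : ℝ => ∫ s in ε..(1/ε), Real.sin (c*s) / s) (𝓝[>] (0:ℝ)) (𝓝 (π/2)) := by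
  have key : ∀ ε : ℝ, (∫ s in ε..(1/ε), Real.sin (c*s) / s)
      = ∫ v in c*ε..c*(1/ε), Real.sin v / v := by
    intro ε
    have h := intervalIntegral.integral_comp_mul_left (a := ε) (b := 1/ε)
      (fun v => Real.sin v / v) hc.ne'
    calc (∫ s in ε..(1/ε), Real.sin (c*s) / s)
        = c • ∫ s in ε..(1/ε), Real.sin (c*s) / (c*s) := by
          rw [← intervalIntegral.integral_smul]
          apply intervalIntegral.integral_congr
          intro s _
          rcases eq_or_ne s 0 with h0 | h0
          · simp [h0]
          · show Real.sin (c*s) / s = c • (Real.sin (c*s) / (c*s))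
            rw [smul_eq_mul]
            field_simp
      _ = c • (c⁻¹ • ∫ v in c*ε..c*(1/ε), Real.sin v / v) := by rw [h]
      _ = ∫ v in c*ε..c*(1/ε), Real.sin v / v := by
          rw [smul_smul, mul_inv_cancel₀ hc.ne', one_smul]
  have ha : Tendsto (fun ε : ℝ => c*ε) (𝓝[>] (0:ℝ)) (𝓝 0) := by
    have h0 : Tendsto (fun ε : ℝ => ε) (𝓝[>] (0:ℝ)) (𝓝 0) :=
      tendsto_id.mono_left nhdsWithin_le_nhds
    simpa using h0.const_mul c
  have hr : Tendsto (fun ε : ℝ => c*(1/ε)) (𝓝[>] (0:ℝ)) atTop := by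
    have : Tendsto (fun ε : ℝ => (1/ε)) (𝓝[>] (0:ℝ)) atTop := by
      simpa [one_div] using tendsto_inv_nhdsGT_zero
    exact this.const_mul_atTop hc
  have := dirichlet2 ha hr
  exact this.congr fun ε => (key ε).symm



lemma integrand_eq (μ b s : ℝ) (hs : s ≠ 0) :
    Complex.exp (Complex.I * μ * ((s + b : ℝ) : ℂ)) / ((s:ℝ):ℂ)
      + Complex.exp (Complex.I * μ * ((-s + b : ℝ) : ℂ)) / ((-s:ℝ):ℂ)
      = Complex.exp (Complex.I * μ * b) * (2 * Complex.I)
        * ((Real.sin (μ * s) / s : ℝ) : ℂ) := by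
  have hs' : ((s:ℝ):ℂ) ≠ 0 := Complex.ofReal_ne_zero.2 hs
  have h1 : (Complex.I * μ * ((s + b : ℝ) : ℂ))
      = ((μ*s : ℝ):ℂ) * Complex.I + Complex.I * μ * b := by push_cast; ring
  have h2 : (Complex.I * μ * ((-s + b : ℝ) : ℂ))
      = (-((μ*s:ℝ):ℂ)) * Complex.I + Complex.I * μ * b := by push_cast; ring
  rw [h1, h2, Complex.exp_add, Complex.exp_add, Complex.exp_mul_I, Complex.exp_mul_I,
    Complex.cos_neg, Complex.sin_neg]
  push_cast
  field_simp [hs']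
  ring

theorem main_eventually (μ b : ℝ) : ∀ᶠ ε : ℝ in 𝓝[>] (0:ℝ),
    (∫ t in {t : ℝ | ε ≤ |t - b| ∧ |t - b| ≤ 1 / ε},
        Complex.exp (Complex.I * μ * t) / ((t : ℂ) - b))
      = Complex.exp (Complex.I * μ * b) * (2 * Complex.I)
        * ((∫ s in ε..(1/ε), Real.sin (μ * s) / s : ℝ) : ℂ) := by
  filter_upwards [Ioo_mem_nhdsGT_of_mem (show (0:ℝ) ∈ Ico (0:ℝ) 1 by simp)] with ε hε
  obtain ⟨hε0, hε1⟩ := hε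
  have hεinv : ε ≤ 1/ε := by
    rw [le_div_iff₀ hε0]; nlinarith
  -- set decomposition
  have hset : {t : ℝ | ε ≤ |t - b| ∧ |t - b| ≤ 1 / ε}
      = Icc (b - 1/ε) (b - ε) ∪ Icc (b + ε) (b + 1/ε) := by
    ext t
    simp only [mem_setOf_eq, mem_union, mem_Icc, abs_le, le_abs]
    constructor
    · rintro ⟨h1 | h1, h2, h3⟩
      · right; constructor <;> linarith
      · left; constructor <;> linarith
    · rintro (⟨h1, h2⟩ | ⟨h1, h2⟩)
      · exact ⟨Or.inr (by linarith), by linarith, by linarith⟩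
      · exact ⟨Or.inl (by linarith), by linarith, by linarith⟩
  set φ : ℝ → ℂ := fun t => Complex.exp (Complex.I * μ * t) / ((t : ℂ) - b) with hφ
  have hcont : ∀ t : ℝ, t ≠ b → ContinuousAt φ t := by
    intro t ht
    apply ContinuousAt.div
    · exact Complex.continuous_exp.continuousAt.comp
        ((continuous_const.mul Complex.continuous_ofReal).continuousAt)
    · exact (Complex.continuous_ofReal.sub continuous_const).continuousAt
    · rw [sub_ne_zero]
      exact fun hh => ht (Complex.ofReal_injective hh)
  have hi1 : IntegrableOn φ (Icc (b - 1/ε) (b - ε)) := by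
    apply ContinuousOn.integrableOn_Icc
    intro t ht
    exact (hcont t (by rintro rfl; simp only [mem_Icc] at ht; linarith [ht.2])).continuousWithinAt
  have hi2 : IntegrableOn φ (Icc (b + ε) (b + 1/ε)) := by
    apply ContinuousOn.integrableOn_Icc
    intro t ht
    exact (hcont t (by rintro rfl; simp only [mem_Icc] at ht; linarith [ht.1])).continuousWithinAt
  have hdisj : Disjoint (Icc (b - 1/ε) (b - ε)) (Icc (b + ε) (b + 1/ε)) := by
    rw [Set.disjoint_left]
    rintro t ⟨_, h1⟩ ⟨h2, _⟩
    linarith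
  rw [hset, setIntegral_union hdisj measurableSet_Icc hi1 hi2]
  -- convert to interval integrals
  have hIcc1 : (∫ t in Icc (b - 1/ε) (b - ε), φ t) = ∫ t in (b - 1/ε)..(b - ε), φ t := by
    rw [intervalIntegral.integral_of_le (by linarith), integral_Icc_eq_integral_Ioc]
  have hIcc2 : (∫ t in Icc (b + ε) (b + 1/ε), φ t) = ∫ t in (b + ε)..(b + 1/ε), φ t := by
    rw [intervalIntegral.integral_of_le (by linarith), integral_Icc_eq_integral_Ioc]
  rw [hIcc1, hIcc2]
  -- translation
  set f : ℝ → ℂ := fun s => Complex.exp (Complex.I * μ * ((s + b : ℝ) : ℂ)) / ((s:ℝ):ℂ) with hf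
  have hφf : ∀ t : ℝ, φ t = f (t - b) := by
    intro t
    rw [hφ, hf]
    simp only
    congr 1
    · congr 1
      push_cast
      ring
    · push_cast
      ring
  have htrans : ∀ a c : ℝ, (∫ t in a..c, φ t) = ∫ s in (a-b)..(c-b), f s := by
    intro a c
    rw [show (∫ t in a..c, φ t) = ∫ t in a..c, f (t - b) from
      intervalIntegral.integral_congr fun t _ => hφf t]
    exact intervalIntegral.integral_comp_sub_right f b
  rw [htrans, htrans]
  have e1 : b - 1/ε - b = -(1/ε) := by ring
  have e2 : b - ε - b = -ε := by ring
  have e3 : b + ε - b = ε := by ring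
  have e4 : b + 1/ε - b = 1/ε := by ring
  rw [e1, e2, e3, e4]
  have hneg : (∫ s in (-(1/ε))..(-ε), f s) = ∫ s in ε..(1/ε), f (-s) := by
    rw [intervalIntegral.integral_comp_neg fun s => f s]
  rw [hneg]
  -- combine the two integrals
  have hii1 : IntervalIntegrable (fun s => f (-s)) volume ε (1/ε) := by
    apply ContinuousOn.intervalIntegrable
    intro s hs
    rw [uIcc_of_le hεinv] at hs
    have hs0 : s ≠ 0 := by rintro rfl; simp only [mem_Icc] at hs; linarith [hs.1]
    apply ContinuousAt.continuousWithinAt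
    have h1 : ContinuousAt f (-s) := by
      apply ContinuousAt.div
      · exact Complex.continuous_exp.continuousAt.comp
          ((continuous_const.mul (Complex.continuous_ofReal.comp
            (continuous_id.add continuous_const))).continuousAt)
      · exact Complex.continuous_ofReal.continuousAt
      · exact Complex.ofReal_ne_zero.2 (neg_ne_zero.2 hs0)
    exact h1.comp continuous_neg.continuousAt
  have hii2 : IntervalIntegrable f volume ε (1/ε) := by
    apply ContinuousOn.intervalIntegrable
    intro s hs
    rw [uIcc_of_le hεinv] at hs
    have hs0 : s ≠ 0 := by rintro rfl; simp only [mem_Icc] at hs; linarith [hs.1]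
    apply ContinuousAt.continuousWithinAt
    apply ContinuousAt.div
    · exact Complex.continuous_exp.continuousAt.comp
        ((continuous_const.mul (Complex.continuous_ofReal.comp
          (continuous_id.add continuous_const))).continuousAt)
    · exact Complex.continuous_ofReal.continuousAt
    · exact Complex.ofReal_ne_zero.2 hs0
  rw [← intervalIntegral.integral_add hii1 hii2]
  have hcongr : (∫ s in ε..(1/ε), (f (-s) + f s))
      = ∫ s in ε..(1/ε), Complex.exp (Complex.I * μ * b) * (2 * Complex.I)
          * ((Real.sin (μ * s) / s : ℝ) : ℂ) := by
    apply intervalIntegral.integral_congr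
    intro s hs
    rw [uIcc_of_le hεinv] at hs
    have hs0 : s ≠ 0 := by rintro rfl; simp only [mem_Icc] at hs; linarith [hs.1]
    rw [hf]
    simp only
    rw [add_comm]
    exact integrand_eq μ b s hs0
  rw [hcongr, intervalIntegral.integral_const_mul, intervalIntegral.integral_ofReal]



end PVCauchyAux

open PVCauchyAux in
open scoped Topology in
/-- **Principal-value Fourier integral of the Cauchy kernel.**
For real `μ ≠ 0` and `b ∈ ℝ`, the limit as `ε → 0⁺` of
`∫_{ε ≤ |t − b| ≤ 1/ε} e^{iμt}/(t − b) dt` exists and equals `iπ·sgn(μ)·e^{iμb}`. -/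
theorem pv_cauchy_kernel_fourier (μ : ℝ) (hμ : μ ≠ 0) (b : ℝ) :
    Tendsto (fun ε : ℝ =>
        ∫ t in {t : ℝ | ε ≤ |t - b| ∧ |t - b| ≤ 1 / ε},
          Complex.exp (Complex.I * μ * t) / ((t : ℂ) - b))
      (nhdsWithin 0 (Ioi 0))
      (nhds (Complex.I * Real.pi * (if 0 < μ then 1 else -1) *
        Complex.exp (Complex.I * μ * b))) := by
  have hT : Tendsto (fun ε : ℝ => (∫ s in ε..(1/ε), Real.sin (μ * s) / s)) (𝓝[>] (0:ℝ))
      (𝓝 ((if 0 < μ then 1 else -1) * (π/2))) := by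
    rcases hμ.lt_or_gt with hneg | hpos
    · rw [if_neg (not_lt.2 hneg.le)]
      have h1 := (dirichlet_scaled (c := -μ) (by linarith)).neg
      have h2 : ∀ ε : ℝ, (∫ s in ε..(1/ε), Real.sin (μ*s)/s)
          = -(∫ s in ε..(1/ε), Real.sin ((-μ)*s)/s) := by
        intro ε
        rw [← intervalIntegral.integral_neg]
        apply intervalIntegral.integral_congr
        intro s _
        simp [neg_mul, Real.sin_neg, neg_div]
      rw [show (-1 : ℝ) * (π/2) = -(π/2) by ring]
      exact h1.congr fun ε => (h2 ε).symm
    · rw [if_pos hpos, one_mul]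
      exact dirichlet_scaled hpos
  have hT2 : Tendsto (fun ε : ℝ => Complex.exp (Complex.I * μ * b) * (2 * Complex.I)
        * ((∫ s in ε..(1/ε), Real.sin (μ * s) / s : ℝ) : ℂ)) (𝓝[>] (0:ℝ))
      (𝓝 (Complex.exp (Complex.I * μ * b) * (2 * Complex.I)
        * (((if 0 < μ then 1 else -1) * (π/2) : ℝ) : ℂ))) :=
    ((Complex.continuous_ofReal.tendsto _).comp hT).const_mul _
  have heq : Complex.exp (Complex.I * μ * b) * (2 * Complex.I)
        * (((if 0 < μ then 1 else -1) * (π/2) : ℝ) : ℂ)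
      = Complex.I * Real.pi * (if 0 < μ then 1 else -1) * Complex.exp (Complex.I * μ * b) := by
    by_cases h : 0 < μ
    · simp only [if_pos h]
      push_cast
      ring
    · simp only [if_neg h]
      push_cast
      ring
  rw [← heq]
  exact hT2.congr' (EventuallyEq.symm (main_eventually μ b : _))
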